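/- Let λ > 0, t_C ≥ 0, E_C ≥ 0 and let w₁, w₂, s₁, s₂ be positive reals with w₁/s₁ ≥ w₂/s₂ and (s₁, w₁) ≠ (s₂, w₂). Define w = (w₁ + w₂)/2 and s = s_A = (w₁ + w₂)/(w₁/s₁ + w₂/s₂). For a chunk of size ω executed and re-executed at speed v let T_wc(ω, v) = 2·(ω/v + t_C) and E(ω, v) = (ω·v² + E_C)·(1 + λ·(ω/v + t_C)). Then 2·T_wc(w, s) = T_wc(w₁, s₁) + T_wc(w₂, s₂) and 2·E(w, s) < E(w₁, s₁) + E(w₂, s₂). -/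

import Mathlib

set_option maxHeartbeats 1000000 in
/-- Exchange argument for single-speed, hard-deadline. With
`T_wc(ω, v) = 2 (ω/v + t_C)` and `E(ω, v) = (ω v² + E_C)(1 + λ (ω/v + t_C))`,
replacing two unequal chunks `(w₁, s₁), (w₂, s₂)` (with `w₁/s₁ ≥ w₂/s₂`) by two
equal chunks of size `w = (w₁+w₂)/2` at speed `s_A = (w₁+w₂)/(w₁/s₁ + w₂/s₂)`
preserves the worst-case time and strictly decreases the expected energy. -/
theorem stmt_13 (lam tC EC w1 w2 s1 s2 : ℝ) (hlam : 0 < lam) (htC : 0 ≤ tC)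
    (hEC : 0 ≤ EC) (hw1 : 0 < w1) (hw2 : 0 < w2) (hs1 : 0 < s1) (hs2 : 0 < s2)
    (hord : w2 / s2 ≤ w1 / s1) (hne : (s1, w1) ≠ (s2, w2))
    (w s : ℝ) (hw : w = (w1 + w2) / 2) (hs : s = (w1 + w2) / (w1 / s1 + w2 / s2))
    (Twc E : ℝ → ℝ → ℝ)
    (hT : ∀ ω v : ℝ, Twc ω v = 2 * (ω / v + tC))
    (hE : ∀ ω v : ℝ, E ω v = (ω * v ^ 2 + EC) * (1 + lam * (ω / v + tC))) :
    2 * Twc w s = Twc w1 s1 + Twc w2 s2 ∧ 2 * E w s < E w1 s1 + E w2 s2 := by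
  have hp : 0 < w1 / s1 := div_pos hw1 hs1
  have hq : 0 < w2 / s2 := div_pos hw2 hs2
  set p := w1 / s1 with hpd
  set q := w2 / s2 with hqd
  clear_value p q
  have hp0 : p ≠ 0 := ne_of_gt hp
  have hq0 : q ≠ 0 := ne_of_gt hq
  have hpq : (0:ℝ) < p + q := by linarith
  have hpq0 : p + q ≠ 0 := ne_of_gt hpq
  have hw10 : w1 ≠ 0 := ne_of_gt hw1
  have hw20 : w2 ≠ 0 := ne_of_gt hw2
  have hw12 : (0:ℝ) < w1 + w2 := by linarith
  have hw120 : w1 + w2 ≠ 0 := ne_of_gt hw12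
  have hs10 : s1 ≠ 0 := ne_of_gt hs1
  have hs20 : s2 ≠ 0 := ne_of_gt hs2
  constructor
  · rw [hT, hT, hT, hw, hs, ← hpd, ← hqd]
    field_simp
    ring
  · have e0 : E w s = ((w1+w2)^3/(2*(p+q)^2) + EC)*(1+lam*((p+q)/2+tC)) := by
      rw [hE, hw, hs]
      field_simp
    have e1 : E w1 s1 = (w1^3/p^2 + EC)*(1+lam*(p+tC)) := by
      rw [hE, hpd]
      field_simp
    have e2 : E w2 s2 = (w2^3/q^2 + EC)*(1+lam*(q+tC)) := by
      rw [hE, hqd]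
      field_simp
    have decomp : ((w1^3/p^2 + EC)*(1+lam*(p+tC)) + (w2^3/q^2 + EC)*(1+lam*(q+tC)))
        - 2*(((w1+w2)^3/(2*(p+q)^2) + EC)*(1+lam*((p+q)/2+tC)))
        = (1+lam*tC)*((w1^3/p^2 + w2^3/q^2) - (w1+w2)^3/(p+q)^2)
          + lam*((w1^3/p + w2^3/q) - (w1+w2)^3/(2*(p+q))) := by
      field_simp
      ring
    have hA : 0 < 1 + lam*tC := by nlinarith
    -- weak versions
    have hd1w : (w1+w2)^3/(p+q)^2 ≤ w1^3/p^2 + w2^3/q^2 := by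
      rw [div_add_div _ _ (pow_ne_zero 2 hp0) (pow_ne_zero 2 hq0),
        div_le_div_iff₀ (pow_pos hpq 2) (mul_pos (pow_pos hp 2) (pow_pos hq 2))]
      nlinarith [mul_nonneg (sq_nonneg (w1*q - w2*p))
        (show (0:ℝ) ≤ w1*q*(2*p+q) + w2*p*(2*q+p) by
          have h1 : 0 < w1*q*(2*p+q) := by positivity
          have h2 : 0 < w2*p*(2*q+p) := by positivity
          linarith)]
    have hd2w : (w1+w2)^3/(2*(p+q)) ≤ w1^3/p + w2^3/q := by
      have hu : 0 < Real.sqrt w1 := Real.sqrt_pos.mpr hw1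
      have hv : 0 < Real.sqrt w2 := Real.sqrt_pos.mpr hw2
      set u := Real.sqrt w1 with hud
      set v := Real.sqrt w2 with hvd
      have hu2 : u^2 = w1 := Real.sq_sqrt hw1.le
      have hv2 : v^2 = w2 := Real.sq_sqrt hw2.le
      rw [div_add_div _ _ hp0 hq0,
        div_le_div_iff₀ (by linarith : (0:ℝ) < 2*(p+q)) (mul_pos hp hq), ← hu2, ← hv2]
      nlinarith [sq_nonneg (u^3*q - v^3*p),
        mul_nonneg (mul_nonneg (mul_pos hp hq).le (sq_nonneg (u-v)))
          (show (0:ℝ) ≤ u^4 + 2*u^3*v + 2*u*v^3 + v^4 by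
            have h1 : 0 < u^4 := pow_pos hu 4
            have h2 : 0 < v^4 := pow_pos hv 4
            have h3 : 0 < u^3*v := mul_pos (pow_pos hu 3) hv
            have h4 : 0 < u*v^3 := mul_pos hu (pow_pos hv 3)
            linarith)]
    rw [e0, e1, e2]
    rcases eq_or_ne s1 s2 with hss | hss
    · -- equal speeds: strict in the second difference
      have hww : w1 ≠ w2 := fun h => hne (by rw [hss, h])
      have hq' : q = w2 * p / w1 := by
        rw [hqd, hpd, ← hss]
        field_simp
      have hdiff : w1^3/p + w2^3/q - (w1+w2)^3/(2*(p+q)) = w1*(w1-w2)^2/(2*p) := by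
        rw [hq']
        field_simp
        ring
      have hpos : 0 < w1*(w1-w2)^2/(2*p) := by
        have h2 : 0 < (w1-w2)^2 := sq_pos_of_ne_zero (sub_ne_zero.mpr hww)
        have := mul_pos hw1 h2
        exact div_pos this (by linarith)
      have t2 : 0 < (w1^3/p + w2^3/q) - (w1+w2)^3/(2*(p+q)) := by linarith
      have t1 : 0 ≤ (w1^3/p^2 + w2^3/q^2) - (w1+w2)^3/(p+q)^2 := by linarith
      linarith [decomp, mul_nonneg hA.le t1, mul_pos hlam t2]
    · -- distinct speeds: strict in the first difference
      have hne2 : w1*q - w2*p ≠ 0 := by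
        rw [hqd, hpd]
        intro h
        apply hss
        have h' : w1 * (w2 / s2) = w2 * (w1 / s1) := by linarith
        field_simp at h'
        have hmul : 0 < w1 * w2 := mul_pos hw1 hw2
        apply mul_left_cancel₀ (ne_of_gt hmul)
        nlinarith [h']
      have hd1s : (w1+w2)^3/(p+q)^2 < w1^3/p^2 + w2^3/q^2 := by
        rw [div_add_div _ _ (pow_ne_zero 2 hp0) (pow_ne_zero 2 hq0),
          div_lt_div_iff₀ (pow_pos hpq 2) (mul_pos (pow_pos hp 2) (pow_pos hq 2))]
        have hsq : 0 < (w1*q - w2*p)^2 := sq_pos_of_ne_zero hne2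
        nlinarith [mul_pos hsq
          (show (0:ℝ) < w1*q*(2*p+q) + w2*p*(2*q+p) by
            have h1 : 0 < w1*q*(2*p+q) := by positivity
            have h2 : 0 < w2*p*(2*q+p) := by positivity
            linarith)]
      have t1 : 0 < (w1^3/p^2 + w2^3/q^2) - (w1+w2)^3/(p+q)^2 := by linarith
      have t2 : 0 ≤ (w1^3/p + w2^3/q) - (w1+w2)^3/(2*(p+q)) := by linarith
      linarith [decomp, mul_pos hA t1, mul_nonneg hlam.le t2]
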